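/- Let a < 0 and α, β, γ > −1, and for each nonnegative integer n define X_n = ( ∫_a^0 x (x−a)^{α+n} |x|^{β+n} (1−x)^{γ+n} dx ) / ( ∫_a^0 (x−a)^{α+n} |x|^{β+n} (1−x)^{γ+n} dx ). Then lim_{n→∞} X_n = x_1, where x_1 = ( (a+1) − √(a² − a + 1) ) / 3 is the unique zero in [a,0] of the derivative of g(x) = (x−a) x (1−x). -/

import Mathlib

open MeasureTheory Polynomial
open Filter Set

lemma conc (a b : ℝ) (hab : a < b) (w f : ℝ → ℝ)
    (hw_int : IntegrableOn w (Set.Ioo a b))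
    (hw_pos : ∀ x ∈ Set.Ioo a b, 0 < w x)
    (hf : Continuous f)
    (hf_nonneg : ∀ x ∈ Set.Icc a b, 0 ≤ f x)
    (x₁ : ℝ) (hx₁ : x₁ ∈ Set.Ioo a b)
    (hmax : ∀ x ∈ Set.Icc a b, x ≠ x₁ → f x < f x₁) :
    Filter.Tendsto (fun n : ℕ => (∫ x in Set.Ioo a b, x * (w x * f x ^ n)) /
      (∫ x in Set.Ioo a b, w x * f x ^ n)) Filter.atTop (nhds x₁) := by
  obtain ⟨hax₁, hx₁b⟩ := hx₁
  set M := f x₁ with hM_def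
  have hM : 0 < M := by
    have h1 := hf_nonneg a ⟨le_refl a, hab.le⟩
    have h2 := hmax a ⟨le_refl a, hab.le⟩ (fun h => absurd (h ▸ hax₁) (lt_irrefl a))
    linarith
  have hle : ∀ x ∈ Set.Icc a b, f x ≤ M := by
    intro x hx
    rcases eq_or_ne x x₁ with h | h
    · rw [h]
    · exact (hmax x hx h).le
  -- integrability of the basic integrands
  have hwf_int : ∀ n : ℕ, IntegrableOn (fun x => w x * f x ^ n) (Set.Ioo a b) := by
    intro n
    refine Integrable.mono' (g := fun x => M ^ n * w x) (hw_int.const_mul _) ?_ ?_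
    · exact hw_int.1.mul ((hf.pow n).aestronglyMeasurable.restrict)
    · filter_upwards [ae_restrict_mem measurableSet_Ioo] with x hx
      have h1 := (hw_pos x hx).le
      have h2 := hf_nonneg x (Set.Ioo_subset_Icc_self hx)
      have h3 := hle x (Set.Ioo_subset_Icc_self hx)
      rw [Real.norm_eq_abs, abs_of_nonneg (by positivity)]
      calc w x * f x ^ n ≤ w x * M ^ n := by gcongr
        _ = M ^ n * w x := mul_comm _ _
  have hE_int : ∀ n : ℕ, IntegrableOn (fun x => (x - x₁) * (w x * f x ^ n)) (Set.Ioo a b) := by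
    intro n
    refine Integrable.mono' (g := fun x => (b - a) * (w x * f x ^ n))
      ((hwf_int n).const_mul _) ?_ ?_
    · exact ((continuous_id.sub continuous_const).aestronglyMeasurable.restrict).mul (hwf_int n).1
    · filter_upwards [ae_restrict_mem measurableSet_Ioo] with x hx
      have h1 := (hw_pos x hx).le
      have h2 := hf_nonneg x (Set.Ioo_subset_Icc_self hx)
      rw [Real.norm_eq_abs, abs_mul, abs_of_nonneg (by positivity : (0:ℝ) ≤ w x * f x ^ n)]
      have hxx : |x - x₁| ≤ b - a := by
        rw [abs_le]; constructor <;> [linarith [hx.1, hx₁b]; linarith [hx.2, hax₁]]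
      exact mul_le_mul_of_nonneg_right hxx (by positivity)
  -- main ε-argument
  rw [Metric.tendsto_atTop]
  intro ε hε
  set δ := min (ε / 2) (min ((x₁ - a) / 2) ((b - x₁) / 2)) with hδ_def
  have hδ : 0 < δ := by
    apply lt_min (by linarith) (lt_min (by linarith) (by linarith))
  have hδε : δ ≤ ε / 2 := min_le_left _ _
  have hδa : a < x₁ - δ := by
    have h2 : δ ≤ (x₁ - a) / 2 := le_trans (min_le_right _ _) (min_le_left _ _)
    linarith
  have hδb : x₁ + δ < b := by
    have h2 : δ ≤ (b - x₁) / 2 := le_trans (min_le_right _ _) (min_le_right _ _)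
    linarith
  -- the compact set away from x₁ and the max M' there
  set K := Set.Icc a b \ Set.Ioo (x₁ - δ) (x₁ + δ) with hK_def
  have hK : IsCompact K := isCompact_Icc.diff isOpen_Ioo
  have hKne : K.Nonempty := ⟨a, ⟨le_refl a, hab.le⟩, fun h => absurd h.1 (by linarith)⟩
  obtain ⟨z, hzK, hz⟩ := hK.exists_isMaxOn hKne hf.continuousOn
  set M' := f z with hM'_def
  have hzx₁ : z ≠ x₁ := by
    intro h
    exact hzK.2 (h ▸ ⟨by linarith, by linarith⟩)
  have hM'M : M' < M := hmax z hzK.1 hzx₁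
  have hM'0 : 0 ≤ M' := hf_nonneg z hzK.1
  set m := (M' + M) / 2 with hm_def
  have hm0 : 0 < m := by simp only [hm_def]; linarith
  have hM'm : M' < m := by simp only [hm_def]; linarith
  have hmM : m < M := by simp only [hm_def]; linarith
  -- the inner window where f > m
  have hopen : IsOpen (f ⁻¹' Set.Ioi m) := isOpen_Ioi.preimage hf
  obtain ⟨r, hr0, hball⟩ := Metric.isOpen_iff.mp hopen x₁ (by simpa using hmM)
  set r' := min (r / 2) δ with hr'_def
  have hr'0 : 0 < r' := lt_min (by linarith) hδ
  have hr'δ : r' ≤ δ := min_le_right _ _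
  set B := Set.Ioo (x₁ - r') (x₁ + r') with hB_def
  have hBsub : B ⊆ Set.Ioo a b := fun x hx => ⟨by have := hx.1; linarith, by have := hx.2; linarith⟩
  have hfB : ∀ x ∈ B, m < f x := by
    intro x hx
    have : x ∈ Metric.ball x₁ r := by
      rw [Real.ball_eq_Ioo]
      exact ⟨by have := hx.1; have : r' ≤ r / 2 := min_le_left _ _; linarith,
        by have := hx.2; have : r' ≤ r / 2 := min_le_left _ _; linarith⟩
    exact hball this
  set c := ∫ x in B, w x with hc_def
  have hwB_int : IntegrableOn w B := hw_int.mono_set hBsub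
  have hc : 0 < c := by
    rw [hc_def]
    rw [setIntegral_pos_iff_support_of_nonneg_ae ?_ hwB_int]
    · refine lt_of_lt_of_le ?_ (measure_mono (?_ : B ⊆ Function.support w ∩ B))
      · rw [hB_def, Real.volume_Ioo]
        simp only [ENNReal.ofReal_pos]
        linarith
      · intro x hx
        exact ⟨fun h => absurd h (ne_of_gt (hw_pos x (hBsub hx))), hx⟩
    · filter_upwards [ae_restrict_mem measurableSet_Ioo] with x hx
      exact (hw_pos x (hBsub hx)).le
  -- lower bound for the denominator
  have hIlow : ∀ n : ℕ, m ^ n * c ≤ ∫ x in Set.Ioo a b, w x * f x ^ n := by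
    intro n
    have step1 : m ^ n * c = ∫ x in B, m ^ n * w x := by
      rw [hc_def, integral_const_mul]
    have step2 : (∫ x in B, m ^ n * w x) ≤ ∫ x in B, w x * f x ^ n := by
      refine setIntegral_mono_on (hwB_int.const_mul _) ((hwf_int n).mono_set hBsub)
        measurableSet_Ioo ?_
      intro x hx
      rw [mul_comm]
      exact mul_le_mul_of_nonneg_left (pow_le_pow_left₀ hm0.le (hfB x hx).le n)
        (hw_pos x (hBsub hx)).le
    have step3 : (∫ x in B, w x * f x ^ n) ≤ ∫ x in Set.Ioo a b, w x * f x ^ n := by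
      refine setIntegral_mono_set (hwf_int n) ?_ (HasSubset.Subset.eventuallyLE hBsub)
      filter_upwards [ae_restrict_mem measurableSet_Ioo] with x hx
      have h1 := (hw_pos x hx).le
      have h2 := hf_nonneg x (Set.Ioo_subset_Icc_self hx)
      positivity
    linarith
  have hIpos : ∀ n : ℕ, 0 < ∫ x in Set.Ioo a b, w x * f x ^ n := by
    intro n
    refine lt_of_lt_of_le ?_ (hIlow n)
    positivity
  -- splitting into window and tail
  set W := ∫ x in Set.Ioo a b, w x with hW_def
  have hW0 : 0 ≤ W := by
    rw [hW_def]
    refine setIntegral_nonneg measurableSet_Ioo fun x hx => (hw_pos x hx).le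
  set A := Set.Ioo a b ∩ Set.Ioo (x₁ - δ) (x₁ + δ) with hA_def
  set C := Set.Ioo a b \ Set.Ioo (x₁ - δ) (x₁ + δ) with hC_def
  have hAmeas : MeasurableSet A := measurableSet_Ioo.inter measurableSet_Ioo
  have hCmeas : MeasurableSet C := measurableSet_Ioo.diff measurableSet_Ioo
  have hsplit : Set.Ioo a b = A ∪ C := (Set.inter_union_diff _ _).symm
  have hAsub : A ⊆ Set.Ioo a b := Set.inter_subset_left
  have hCsub : C ⊆ Set.Ioo a b := Set.diff_subset
  have hCK : C ⊆ K := fun x hx => ⟨Set.Ioo_subset_Icc_self hx.1, hx.2⟩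
  -- bound the error integral
  have hEbound : ∀ n : ℕ, |∫ x in Set.Ioo a b, (x - x₁) * (w x * f x ^ n)|
      ≤ δ * (∫ x in Set.Ioo a b, w x * f x ^ n) + (b - a) * M' ^ n * W := by
    intro n
    have hiA : IntegrableOn (fun x => (x - x₁) * (w x * f x ^ n)) A := (hE_int n).mono_set hAsub
    have hiC : IntegrableOn (fun x => (x - x₁) * (w x * f x ^ n)) C := (hE_int n).mono_set hCsub
    have hdisj : Disjoint A C := Set.disjoint_sdiff_right.mono_left Set.inter_subset_right
    have hun : (∫ x in Set.Ioo a b, (x - x₁) * (w x * f x ^ n))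
        = (∫ x in A, (x - x₁) * (w x * f x ^ n)) + ∫ x in C, (x - x₁) * (w x * f x ^ n) := by
      rw [hsplit]
      exact setIntegral_union hdisj hCmeas hiA hiC
    have hboundA : |∫ x in A, (x - x₁) * (w x * f x ^ n)|
        ≤ δ * ∫ x in Set.Ioo a b, w x * f x ^ n := by
      calc |∫ x in A, (x - x₁) * (w x * f x ^ n)|
          ≤ ∫ x in A, |(x - x₁) * (w x * f x ^ n)| := by
            simpa only [Real.norm_eq_abs] using
              norm_integral_le_integral_norm (μ := volume.restrict A)
                (fun x => (x - x₁) * (w x * f x ^ n))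
        _ ≤ ∫ x in A, δ * (w x * f x ^ n) := by
            refine setIntegral_mono_on hiA.abs (((hwf_int n).mono_set hAsub).const_mul _)
              hAmeas ?_
            intro x hx
            have h1 := (hw_pos x (hAsub hx)).le
            have h2 := hf_nonneg x (Set.Ioo_subset_Icc_self (hAsub hx))
            rw [abs_mul, abs_of_nonneg (by positivity : (0:ℝ) ≤ w x * f x ^ n)]
            refine mul_le_mul_of_nonneg_right ?_ (by positivity)
            rw [abs_le]
            exact ⟨by have := hx.2.1; linarith, by have := hx.2.2; linarith⟩
        _ = δ * ∫ x in A, w x * f x ^ n := integral_const_mul _ _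
        _ ≤ δ * ∫ x in Set.Ioo a b, w x * f x ^ n := by
            refine mul_le_mul_of_nonneg_left ?_ hδ.le
            refine setIntegral_mono_set (hwf_int n) ?_ (HasSubset.Subset.eventuallyLE hAsub)
            filter_upwards [ae_restrict_mem measurableSet_Ioo] with x hx
            have h1 := (hw_pos x hx).le
            have h2 := hf_nonneg x (Set.Ioo_subset_Icc_self hx)
            positivity
    have hboundC : |∫ x in C, (x - x₁) * (w x * f x ^ n)| ≤ (b - a) * M' ^ n * W := by
      calc |∫ x in C, (x - x₁) * (w x * f x ^ n)|
          ≤ ∫ x in C, |(x - x₁) * (w x * f x ^ n)| := by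
            simpa only [Real.norm_eq_abs] using
              norm_integral_le_integral_norm (μ := volume.restrict C)
                (fun x => (x - x₁) * (w x * f x ^ n))
        _ ≤ ∫ x in C, ((b - a) * M' ^ n) * w x := by
            refine setIntegral_mono_on hiC.abs ((hw_int.mono_set hCsub).const_mul _)
              hCmeas ?_
            intro x hx
            have hxI := hCsub hx
            have h1 := (hw_pos x hxI).le
            have h2 := hf_nonneg x (Set.Ioo_subset_Icc_self hxI)
            have h3 : f x ≤ M' := hz (hCK hx)
            rw [abs_mul, abs_of_nonneg (by positivity : (0:ℝ) ≤ w x * f x ^ n)]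
            have hxx : |x - x₁| ≤ b - a := by
              rw [abs_le]
              exact ⟨by have := hxI.1; linarith, by have := hxI.2; linarith⟩
            calc |x - x₁| * (w x * f x ^ n) ≤ (b - a) * (w x * f x ^ n) :=
                  mul_le_mul_of_nonneg_right hxx (by positivity)
              _ ≤ (b - a) * (w x * M' ^ n) := by
                  refine mul_le_mul_of_nonneg_left ?_ (by linarith)
                  exact mul_le_mul_of_nonneg_left (pow_le_pow_left₀ h2 h3 n) h1
              _ = ((b - a) * M' ^ n) * w x := by ring
        _ = ((b - a) * M' ^ n) * ∫ x in C, w x := integral_const_mul _ _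
        _ ≤ ((b - a) * M' ^ n) * W := by
            have hba : (0:ℝ) ≤ b - a := by linarith
            refine mul_le_mul_of_nonneg_left ?_ (mul_nonneg hba (pow_nonneg hM'0 n))
            rw [hW_def]
            refine setIntegral_mono_set hw_int ?_ (HasSubset.Subset.eventuallyLE hCsub)
            filter_upwards [ae_restrict_mem measurableSet_Ioo] with x hx
            exact (hw_pos x hx).le
        _ = (b - a) * M' ^ n * W := by ring
    calc |∫ x in Set.Ioo a b, (x - x₁) * (w x * f x ^ n)|
        ≤ |∫ x in A, (x - x₁) * (w x * f x ^ n)| + |∫ x in C, (x - x₁) * (w x * f x ^ n)| := by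
          rw [hun]; exact abs_add_le _ _
      _ ≤ δ * (∫ x in Set.Ioo a b, w x * f x ^ n) + (b - a) * M' ^ n * W := by
          exact add_le_add hboundA hboundC
  -- identify the ratio minus x₁
  have hXdiff : ∀ n : ℕ,
      (∫ x in Set.Ioo a b, x * (w x * f x ^ n)) / (∫ x in Set.Ioo a b, w x * f x ^ n) - x₁
      = (∫ x in Set.Ioo a b, (x - x₁) * (w x * f x ^ n)) /
        (∫ x in Set.Ioo a b, w x * f x ^ n) := by
    intro n
    have hnum : (∫ x in Set.Ioo a b, x * (w x * f x ^ n))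
        = (∫ x in Set.Ioo a b, (x - x₁) * (w x * f x ^ n))
          + x₁ * ∫ x in Set.Ioo a b, w x * f x ^ n := by
      rw [← integral_const_mul, ← integral_add (hE_int n) (((hwf_int n)).const_mul x₁)]
      refine setIntegral_congr_fun measurableSet_Ioo fun x _ => by ring
    rw [hnum]
    field_simp [(hIpos n).ne']
    ring
  -- conclude
  set q := M' / m with hq_def
  have hq0 : 0 ≤ q := div_nonneg hM'0 hm0.le
  have hq1 : q < 1 := (div_lt_one hm0).2 hM'm
  set D := (b - a) * W / c with hD_def
  have hD0 : 0 ≤ D := by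
    apply div_nonneg _ hc.le
    have hba : 0 ≤ b - a := by linarith
    exact mul_nonneg hba hW0
  have htend : Tendsto (fun n : ℕ => D * q ^ n) atTop (nhds 0) := by
    have := tendsto_pow_atTop_nhds_zero_of_lt_one hq0 hq1
    simpa using this.const_mul D
  have hev : ∀ᶠ n : ℕ in atTop, D * q ^ n < ε / 2 :=
    htend.eventually (eventually_lt_nhds (by linarith))
  obtain ⟨N, hN⟩ := eventually_atTop.mp hev
  refine ⟨N, fun n hn => ?_⟩
  rw [Real.dist_eq, hXdiff n, abs_div,
    abs_of_pos (hIpos n)]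
  have key : |∫ x in Set.Ioo a b, (x - x₁) * (w x * f x ^ n)|
      / (∫ x in Set.Ioo a b, w x * f x ^ n) ≤ δ + D * q ^ n := by
    rw [div_le_iff₀ (hIpos n)]
    calc |∫ x in Set.Ioo a b, (x - x₁) * (w x * f x ^ n)|
        ≤ δ * (∫ x in Set.Ioo a b, w x * f x ^ n) + (b - a) * M' ^ n * W := hEbound n
      _ ≤ δ * (∫ x in Set.Ioo a b, w x * f x ^ n)
          + (D * q ^ n) * (∫ x in Set.Ioo a b, w x * f x ^ n) := by
          refine add_le_add le_rfl ?_
          have h1 : (b - a) * M' ^ n * W = (D * q ^ n) * (m ^ n * c) := by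
            rw [hD_def, hq_def, div_pow]
            field_simp
          rw [h1]
          refine mul_le_mul_of_nonneg_left (hIlow n) ?_
          positivity
      _ = (δ + D * q ^ n) * (∫ x in Set.Ioo a b, w x * f x ^ n) := by ring
  have := hN n hn
  linarith [key]
open MeasureTheory Polynomial


/-- **Asymptotics of the first-moment ratio** `X_n` of the weight
`(x-a)^{α+n}|x|^{β+n}(1-x)^{γ+n}` on `[a,0]`: `X_n → x₁` as `n → ∞`, where
`x₁ = ((a+1) - √(a²-a+1))/3` is the unique zero in `[a,0]` of the derivative of
`g(x) = (x-a)x(1-x)`. -/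
theorem stmt_17 (a : ℝ) (ha : a < 0) (α β γ : ℝ)
    (hα : -1 < α) (hβ : -1 < β) (hγ : -1 < γ)
    (X : ℕ → ℝ)
    (hX : ∀ n : ℕ, X n =
      (∫ x in Set.Ioo a 0, x * ((x - a) ^ (α + n) * |x| ^ (β + n) * (1 - x) ^ (γ + n))) /
      (∫ x in Set.Ioo a 0, (x - a) ^ (α + n) * |x| ^ (β + n) * (1 - x) ^ (γ + n))) :
    (((a + 1) - Real.sqrt (a ^ 2 - a + 1)) / 3 ∈ Set.Icc a 0) ∧
    (deriv (fun x : ℝ => (x - a) * x * (1 - x))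
        (((a + 1) - Real.sqrt (a ^ 2 - a + 1)) / 3) = 0) ∧
    Filter.Tendsto X Filter.atTop
      (nhds (((a + 1) - Real.sqrt (a ^ 2 - a + 1)) / 3)) := by
  have h1 : (0:ℝ) < a ^ 2 - a + 1 := by nlinarith
  set s := Real.sqrt (a ^ 2 - a + 1) with hs_def
  have hsnn : 0 ≤ s := Real.sqrt_nonneg _
  have hs2 : s ^ 2 = a ^ 2 - a + 1 := Real.sq_sqrt h1.le
  have hs_gt : a + 1 < s := by nlinarith
  have hs_gt2 : -(a + 1) < s := by nlinarith
  have hs_lt : s < 1 - 2 * a := by nlinarith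
  set x₁ := (a + 1 - s) / 3 with hx₁_def
  set x₂ := (a + 1 + s) / 3 with hx₂_def
  have hax₁ : a < x₁ := by rw [hx₁_def]; linarith
  have hx₁0 : x₁ < 0 := by rw [hx₁_def]; linarith
  have hx₁x₂ : x₁ < x₂ := by rw [hx₁_def, hx₂_def]; linarith
  have hx₂0 : 0 < x₂ := by rw [hx₂_def]; linarith
  set f : ℝ → ℝ := fun x => x ^ 3 - (1 + a) * x ^ 2 + a * x with hf_def
  have hfc : Continuous f := by rw [hf_def]; continuity
  have hHD : ∀ x : ℝ, HasDerivAt f (3 * x ^ 2 - 2 * (1 + a) * x + a) x := by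
    intro x
    have h := ((hasDerivAt_pow 3 x).sub ((hasDerivAt_pow 2 x).const_mul (1 + a))).add
      ((hasDerivAt_id x).const_mul a)
    rw [hf_def]
    refine h.congr_deriv ?_
    push_cast
    ring
  have hderiv : ∀ x : ℝ, deriv f x = 3 * (x - x₁) * (x - x₂) := by
    intro x
    rw [(hHD x).deriv, hx₁_def, hx₂_def]
    linear_combination (1/3 : ℝ) * hs2
  have hmono : StrictMonoOn f (Set.Icc a x₁) := by
    refine strictMonoOn_of_deriv_pos (convex_Icc _ _) hfc.continuousOn ?_
    intro x hx
    rw [interior_Icc] at hx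
    rw [hderiv x]
    have h1 : x - x₁ < 0 := sub_neg.2 hx.2
    have h2 : x - x₂ < 0 := sub_neg.2 (hx.2.trans hx₁x₂)
    nlinarith
  have hanti : StrictAntiOn f (Set.Icc x₁ 0) := by
    refine strictAntiOn_of_deriv_neg (convex_Icc _ _) hfc.continuousOn ?_
    intro x hx
    rw [interior_Icc] at hx
    rw [hderiv x]
    have h1 : 0 < x - x₁ := sub_pos.2 hx.1
    have h2 : x - x₂ < 0 := sub_neg.2 (hx.2.trans hx₂0)
    nlinarith
  have hmax : ∀ x ∈ Set.Icc a 0, x ≠ x₁ → f x < f x₁ := by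
    intro x hx hne
    rcases lt_or_gt_of_ne hne with h | h
    · exact hmono ⟨hx.1, h.le⟩ ⟨hax₁.le, le_refl x₁⟩ h
    · exact hanti ⟨le_refl x₁, hx₁0.le⟩ ⟨h.le, hx.2⟩ h
  have hf_fact : ∀ x : ℝ, f x = (x - a) * -x * (1 - x) := by
    intro x; rw [hf_def]; ring
  have hf_nonneg : ∀ x ∈ Set.Icc a 0, 0 ≤ f x := by
    intro x hx
    rw [hf_fact x]
    have h1 : 0 ≤ x - a := by linarith [hx.1]
    have h2 : 0 ≤ -x := by linarith [hx.2]
    have h3 : 0 ≤ 1 - x := by linarith [hx.2]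
    positivity
  set w : ℝ → ℝ := fun x => (x - a) ^ α * ((-x) ^ β * (1 - x) ^ γ) with hw_def
  have hw_pos : ∀ x ∈ Set.Ioo a 0, 0 < w x := by
    intro x hx
    rw [hw_def]
    have h1 : 0 < x - a := sub_pos.2 hx.1
    have h2 : 0 < -x := neg_pos.2 hx.2
    have h3 : 0 < 1 - x := by linarith [hx.2]
    positivity
  have hw_int : IntegrableOn w (Set.Ioo a 0) := by
    have ha2 : a < a / 2 := by linarith
    have ha20 : a / 2 < 0 := by linarith
    have hw1 : IntervalIntegrable w volume a (a / 2) := by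
      have h0 : IntervalIntegrable (fun x : ℝ => x ^ α) volume 0 (a / 2 - a) :=
        intervalIntegral.intervalIntegrable_rpow' hα
      have base : IntervalIntegrable (fun x : ℝ => (x - a) ^ α) volume a (a / 2) := by
        have h1 := h0.comp_sub_right a
        simpa using h1
      have hcont : ContinuousOn (fun x : ℝ => (-x) ^ β * (1 - x) ^ γ) (Set.uIcc a (a / 2)) := by
        rw [Set.uIcc_of_le ha2.le]
        refine ContinuousOn.mul ?_ ?_
        · refine ContinuousOn.rpow_const continuous_neg.continuousOn ?_
          intro x hx
          left
          have := hx.2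
          intro h
          rw [neg_eq_zero] at h
          linarith
        · refine ContinuousOn.rpow_const (continuous_const.sub continuous_id).continuousOn ?_
          intro x hx
          left
          have := hx.2
          intro h
          have : (1:ℝ) - x = 0 := h
          linarith
      have := base.mul_continuousOn hcont
      rw [hw_def]
      exact this
    have hw2 : IntervalIntegrable w volume (a / 2) 0 := by
      have h0 : IntervalIntegrable (fun x : ℝ => x ^ β) volume (-(a / 2)) (-0) :=
        intervalIntegral.intervalIntegrable_rpow' hβ
      have base : IntervalIntegrable (fun x : ℝ => (-x) ^ β) volume (a / 2) 0 := by
        have h1 := (IntervalIntegrable.iff_comp_neg).mp h0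
        simpa using h1
      have hcont : ContinuousOn (fun x : ℝ => (x - a) ^ α * (1 - x) ^ γ)
          (Set.uIcc (a / 2) 0) := by
        rw [Set.uIcc_of_le ha20.le]
        refine ContinuousOn.mul ?_ ?_
        · refine ContinuousOn.rpow_const (continuous_id.sub continuous_const).continuousOn ?_
          intro x hx
          left
          have := hx.1
          intro h
          have : x - a = 0 := h
          linarith
        · refine ContinuousOn.rpow_const (continuous_const.sub continuous_id).continuousOn ?_
          intro x hx
          left
          have := hx.2
          intro h
          have : (1:ℝ) - x = 0 := h
          linarith
      have h2 := base.mul_continuousOn hcont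
      have heq : (fun x : ℝ => (-x) ^ β * ((x - a) ^ α * (1 - x) ^ γ)) = w := by
        funext x
        rw [hw_def]
        ring
      rwa [heq] at h2
    exact (intervalIntegrable_iff_integrableOn_Ioo_of_le ha.le).mp (hw1.trans hw2)
  -- rewrite the integrands
  have hint_eq : ∀ (n : ℕ), ∀ x ∈ Set.Ioo a 0,
      (x - a) ^ (α + (n:ℝ)) * |x| ^ (β + (n:ℝ)) * (1 - x) ^ (γ + (n:ℝ)) = w x * f x ^ n := by
    intro n x hx
    have hxa : 0 < x - a := sub_pos.2 hx.1
    have hx0 : x < 0 := hx.2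
    have hnx : 0 < -x := neg_pos.2 hx0
    have hx1 : 0 < 1 - x := by linarith
    rw [abs_of_neg hx0, Real.rpow_add hxa, Real.rpow_add hnx, Real.rpow_add hx1,
      Real.rpow_natCast, Real.rpow_natCast, Real.rpow_natCast, hw_def, hf_fact x, mul_pow, mul_pow]
    ring
  have hXrw : ∀ n : ℕ, X n = (∫ x in Set.Ioo a 0, x * (w x * f x ^ n)) /
      (∫ x in Set.Ioo a 0, w x * f x ^ n) := by
    intro n
    rw [hX n]
    congr 1
    · refine setIntegral_congr_fun measurableSet_Ioo fun x hx => ?_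
      rw [hint_eq n x hx]
    · exact setIntegral_congr_fun measurableSet_Ioo fun x hx => hint_eq n x hx
  refine ⟨⟨hax₁.le, hx₁0.le⟩, ?_, ?_⟩
  · have heq : (fun x : ℝ => (x - a) * x * (1 - x)) = fun x => -f x := by
      funext x
      rw [hf_def]
      ring
    rw [heq, deriv.fun_neg, hderiv x₁]
    simp
  · have hconc := conc a 0 ha w f hw_int hw_pos hfc hf_nonneg x₁ ⟨hax₁, hx₁0⟩ hmax
    exact hconc.congr fun n => (hXrw n).symm
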